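/- Let G be a generating set of L. Then G ⊆ L_≻ is a ≻-Gröbner basis of L if and only if for each pair u, v ∈ G with supp(x^(u,v)) ∩ supp(y^(u,v)) = ∅, there exists a ≻-reduction path between x^(u,v) and y^(u,v) in G(F_{L, z^(u,v)}, G). (Cancellation criterion: critical pairs with overlapping negative supports may be discarded.) -/

import Mathlib

open scoped Classical

noncomputable section

variable {ι : Type*} [Fintype ι]

/-- `x ∈ ℕ^n`, i.e. all coordinates nonnegative. -/
def Nonneg (x : ι → ℤ) : Prop := ∀ i, 0 ≤ x i

/-- componentwise positive part `u⁺`. -/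
def vposPart (x : ι → ℤ) : ι → ℤ := fun i => max (x i) 0

/-- componentwise negative part `u⁻`. -/
def vnegPart (x : ι → ℤ) : ι → ℤ := fun i => max (-x i) 0

/-- support of a vector. -/
def suppV (x : ι → ℤ) : Set ι := {i | x i ≠ 0}

/-- membership in the fiber `F_{L,b} = {x ∈ ℕ^n : x ≡ b (mod L)}`. -/
def inFiber (L : AddSubgroup (ι → ℤ)) (b x : ι → ℤ) : Prop :=
  Nonneg x ∧ x - b ∈ L

/-- adjacency in the fiber graph: `x` and `y` differ by an element of `±S`. -/
def adjS (S : Set (ι → ℤ)) (x y : ι → ℤ) : Prop := x - y ∈ S ∨ y - x ∈ S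

/-- `p 0, p 1, …, p k` is a path in the fiber graph `G(F_{L,b}, S)`. -/
def IsPathIn (L : AddSubgroup (ι → ℤ)) (S : Set (ι → ℤ)) (b : ι → ℤ)
    (k : ℕ) (p : ℕ → ι → ℤ) : Prop :=
  (∀ i ≤ k, inFiber L b (p i)) ∧ ∀ i < k, adjS S (p i) (p (i+1))

/-- `x` and `y` are connected in the fiber graph `G(F_{L,b}, S)`. -/
def ConnIn (L : AddSubgroup (ι → ℤ)) (S : Set (ι → ℤ)) (b x y : ι → ℤ) : Prop :=
  ∃ k p, IsPathIn L S b k p ∧ p 0 = x ∧ p k = y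

/-- `S` is a generating set of the lattice `L`: all fiber graphs are connected. -/
def IsGenSet (L : AddSubgroup (ι → ℤ)) (S : Set (ι → ℤ)) : Prop :=
  ∀ b x y, inFiber L b x → inFiber L b y → ConnIn L S b x y

/-- `succ` (written `≻`) is a term ordering for `L`: an additive total
well-ordering on every fiber. -/
structure IsTermOrder (L : AddSubgroup (ι → ℤ))
    (succ : (ι → ℤ) → (ι → ℤ) → Prop) : Prop where
  trans : ∀ {x y z}, succ x y → succ y z → succ x z
  irrefl : ∀ x, ¬ succ x x
  total : ∀ b x y, inFiber L b x → inFiber L b y → x ≠ y → succ x y ∨ succ y x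
  additive : ∀ x y γ, Nonneg γ → succ x y → succ (x + γ) (y + γ)
  wf : ∀ b, WellFounded (fun x y : ι → ℤ => inFiber L b x ∧ inFiber L b y ∧ succ y x)

/-- `L_≻ = {u ∈ L : u⁺ ≻ u⁻}`. -/
def Lpos (L : AddSubgroup (ι → ℤ)) (succ : (ι → ℤ) → (ι → ℤ) → Prop) :
    Set (ι → ℤ) :=
  {u | u ∈ L ∧ succ (vposPart u) (vnegPart u)}

/-- `m` is the `≻`-minimal element of the fiber `F_{L,b}`. -/
def IsMinimalFiber (L : AddSubgroup (ι → ℤ)) (b : ι → ℤ)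
    (succ : (ι → ℤ) → (ι → ℤ) → Prop) (m : ι → ℤ) : Prop :=
  inFiber L b m ∧ ∀ y, inFiber L b y → y ≠ m → succ y m

/-- `G` is a `≻`-Gröbner basis of `L`: from every `x ∈ ℕ^n` there is a
`≻`-decreasing path in `G(F_{L,x},G)` to the `≻`-minimal element of `F_{L,x}`. -/
def IsGroebner (L : AddSubgroup (ι → ℤ)) (succ : (ι → ℤ) → (ι → ℤ) → Prop)
    (G : Set (ι → ℤ)) : Prop :=
  ∀ x, Nonneg x → ∃ m, IsMinimalFiber L x succ m ∧
    ∃ k p, IsPathIn L G x k p ∧ p 0 = x ∧ p k = m ∧ ∀ i < k, succ (p i) (p (i+1))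

/-- there is a `≻`-reduction path from `x` to `y` in `G(F_{L,b},G)`:
no intermediate node is `≻` than both endpoints. -/
def IsRedPath (L : AddSubgroup (ι → ℤ)) (G : Set (ι → ℤ)) (b : ι → ℤ)
    (succ : (ι → ℤ) → (ι → ℤ) → Prop) (x y : ι → ℤ) : Prop :=
  ∃ k p, IsPathIn L G b k p ∧ p 0 = x ∧ p k = y ∧
    ∀ i, 0 < i → i < k → ¬ (succ (p i) x ∧ succ (p i) y)

/-- `(x,z,y)` is a `≻`-critical path in `G(F_{L,b},G)`. -/
def IsCriticalIn (L : AddSubgroup (ι → ℤ)) (G : Set (ι → ℤ)) (b : ι → ℤ)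
    (succ : (ι → ℤ) → (ι → ℤ) → Prop) (x z y : ι → ℤ) : Prop :=
  inFiber L b x ∧ inFiber L b z ∧ inFiber L b y ∧
  adjS G x z ∧ adjS G z y ∧ succ z x ∧ succ z y

/-- `z^(u,v) := max{u⁺, v⁺}` componentwise. -/
def zOf (u v : ι → ℤ) : ι → ℤ := fun i => max (vposPart u i) (vposPart v i)

/-- `x^(u,v) := z^(u,v) − u`. -/
def xOf (u v : ι → ℤ) : ι → ℤ := zOf u v - u

/-- `y^(u,v) := z^(u,v) − v`. -/
def yOf (u v : ι → ℤ) : ι → ℤ := zOf u v - v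

/-- `(x,z,y)` is a `≻`-critical path for the pair `(u,v)`. -/
def IsCriticalFor (succ : (ι → ℤ) → (ι → ℤ) → Prop) (u v x z y : ι → ℤ) : Prop :=
  Nonneg x ∧ Nonneg z ∧ Nonneg y ∧ z - x = u ∧ z - y = v ∧ succ z x ∧ succ z y

/-- rational inner product `φ·x`. -/
def qdot (φ : ι → ℚ) (x : ι → ℤ) : ℚ := ∑ i, φ i * (x i : ℚ)

/-- there is a `φ`-reduction path from `x` to `y` in `G(F_{L,b},G)`. -/
def IsPhiRedPath (L : AddSubgroup (ι → ℤ)) (G : Set (ι → ℤ)) (b : ι → ℤ)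
    (φ : ι → ℚ) (x y : ι → ℤ) : Prop :=
  ∃ k p, IsPathIn L G b k p ∧ p 0 = x ∧ p k = y ∧
    ∀ i, 0 < i → i < k → ¬ (qdot φ x < qdot φ (p i) ∧ qdot φ y < qdot φ (p i))

/-- `G` is a `φ`-Gröbner basis of `L`. -/
def IsPhiGroebner (L : AddSubgroup (ι → ℤ)) (φ : ι → ℚ) (G : Set (ι → ℤ)) : Prop :=
  ∀ b x y, inFiber L b x → inFiber L b y → IsPhiRedPath L G b φ x y

/-- `x ∧_σ y`: componentwise min on `σ`, zero elsewhere. -/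
def meetOn (σ : Set ι) (x y : ι → ℤ) : ι → ℤ :=
  fun i => if i ∈ σ then min (x i) (y i) else 0

/-- `T` is `σ`-saturated on `S`. -/
def IsSaturatedOn (L : AddSubgroup (ι → ℤ)) (σ : Set ι) (S T : Set (ι → ℤ)) : Prop :=
  ∀ b x y, inFiber L b x → inFiber L b y → ConnIn L S b x y →
    ConnIn L T (b - meetOn σ x y) (x - meetOn σ x y) (y - meetOn σ x y)

/-- membership in `F^σ_{L,b}`: nonnegative outside `σ`. -/
def inFiberFree (L : AddSubgroup (ι → ℤ)) (σ : Set ι) (b x : ι → ℤ) : Prop :=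
  (∀ i, i ∉ σ → 0 ≤ x i) ∧ x - b ∈ L

/-- path in the graph `G(F^σ_{L,b}, S)`. -/
def IsPathFree (L : AddSubgroup (ι → ℤ)) (σ : Set ι) (S : Set (ι → ℤ)) (b : ι → ℤ)
    (k : ℕ) (p : ℕ → ι → ℤ) : Prop :=
  (∀ i ≤ k, inFiberFree L σ b (p i)) ∧ ∀ i < k, adjS S (p i) (p (i+1))

/-- connectivity in `G(F^σ_{L,b}, S)`. -/
def ConnFree (L : AddSubgroup (ι → ℤ)) (σ : Set ι) (S : Set (ι → ℤ))
    (b x y : ι → ℤ) : Prop :=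
  ∃ k p, IsPathFree L σ S b k p ∧ p 0 = x ∧ p k = y

/-- `S` is a `σ`-generating set of `L`. -/
def IsGenSetFree (L : AddSubgroup (ι → ℤ)) (σ : Set ι) (S : Set (ι → ℤ)) : Prop :=
  ∀ b x y, inFiberFree L σ b x → inFiberFree L σ b y → ConnFree L σ S b x y

/-- there is a `z`-bounded path from `x` to `y` in `G(F_{L,b},G)`:
all nodes are `≺ z`. -/
def IsBoundedPath (L : AddSubgroup (ι → ℤ)) (G : Set (ι → ℤ)) (b : ι → ℤ)
    (succ : (ι → ℤ) → (ι → ℤ) → Prop) (z x y : ι → ℤ) : Prop :=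
  ∃ k p, IsPathIn L G b k p ∧ p 0 = x ∧ p k = y ∧ ∀ i ≤ k, succ z (p i)

/-- `ē^i = −e^i` as a rational vector. -/
def ebar [DecidableEq ι] (i : ι) : ι → ℚ := fun j => if j = i then -1 else 0

/-- projection deleting the `i`-th coordinate. -/
def projCoord {n : ℕ} (i : Fin (n+1)) : (Fin (n+1) → ℤ) →+ (Fin n → ℤ) where
  toFun x := fun j => x (i.succAbove j)
  map_zero' := rfl
  map_add' _ _ := rfl

/-- projection onto the coordinates outside `σ`. -/
def projSet {n : ℕ} (σ : Finset (Fin n)) :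
    (Fin n → ℤ) →+ ({ i : Fin n // i ∉ σ } → ℤ) where
  toFun x := fun j => x j.1
  map_zero' := rfl
  map_add' _ _ := rfl

end

section Proof

variable {n : ℕ} {L : AddSubgroup (Fin n → ℤ)} {succ : (Fin n → ℤ) → (Fin n → ℤ) → Prop}
  {G : Set (Fin n → ℤ)}

lemma succ_asymm (hto : IsTermOrder L succ) {a b : Fin n → ℤ} (h : succ a b) : ¬ succ b a :=
  fun h' => hto.irrefl a (hto.trans h h')

lemma fiber_trans {b x w : Fin n → ℤ} (hx : inFiber L b x) :
    inFiber L x w ↔ inFiber L b w := by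
  constructor
  · rintro ⟨h1, h2⟩
    refine ⟨h1, ?_⟩
    have h3 := L.add_mem h2 hx.2
    simpa [sub_add_sub_cancel] using h3
  · rintro ⟨h1, h2⟩
    refine ⟨h1, ?_⟩
    have h3 := L.sub_mem h2 hx.2
    simpa [sub_sub_sub_cancel_right] using h3

lemma zero_not_mem_G (hto : IsTermOrder L succ) (hG : G ⊆ Lpos L succ) :
    (0 : Fin n → ℤ) ∉ G := by
  intro h
  have h2 := (hG h).2
  have e1 : vposPart (0 : Fin n → ℤ) = 0 := funext fun i => by simp [vposPart]
  have e2 : vnegPart (0 : Fin n → ℤ) = 0 := funext fun i => by simp [vnegPart]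
  rw [e1, e2] at h2
  exact hto.irrefl 0 h2

lemma adjS_symm {S : Set (Fin n → ℤ)} {a b : Fin n → ℤ} (h : adjS S a b) : adjS S b a :=
  h.symm

lemma adjS_ne (hto : IsTermOrder L succ) (hG : G ⊆ Lpos L succ) {a b : Fin n → ℤ}
    (h : adjS G a b) : a ≠ b := by
  rintro rfl
  have h0 : a - a = (0 : Fin n → ℤ) := by simp
  rcases h with h | h <;> rw [h0] at h <;> exact zero_not_mem_G hto hG h

/-- orientation of an edge below a peak: if `z ≻ x` and `z,x` adjacent via `G ⊆ L_≻`,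
then `z - x ∈ G`. -/
lemma orient (hto : IsTermOrder L succ) (hG : G ⊆ Lpos L succ) {x z : Fin n → ℤ}
    (hxn : Nonneg x) (hzn : Nonneg z) (hadj : z - x ∈ G ∨ x - z ∈ G) (hs : succ z x) :
    z - x ∈ G := by
  rcases hadj with h | h
  · exact h
  · exfalso
    have hgL := hG h
    set g : Fin n → ℤ := x - z with hg
    set w : Fin n → ℤ := fun i => x i - vposPart g i with hw
    have hwn : Nonneg w := by
      intro i
      rcases le_total (g i) 0 with hgi | hgi
      · have : vposPart g i = 0 := by simp [vposPart, hgi]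
        simp [hw, this, hxn i]
      · have : vposPart g i = g i := by simp [vposPart, hgi]
        simp only [hw, this, hg, Pi.sub_apply]
        have h6 : vposPart (x - z) i = x i - z i := this; have := hzn i; omega
    have hx' : vposPart g + w = x := funext fun i => by
      simp [hw, vposPart]
    have hz' : vnegPart g + w = z := funext fun i => by
      simp only [hw, Pi.add_apply, vnegPart, vposPart, hg, Pi.sub_apply]
      rcases le_total (x i - z i) 0 with hgi | hgi
      · rw [max_eq_left (by omega), max_eq_right hgi]; ring
      · rw [max_eq_right (by omega), max_eq_left hgi]; ring
    have hadd := hto.additive _ _ w hwn hgL.2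
    rw [hx', hz'] at hadd
    exact succ_asymm hto hs hadd

/-- fibers are finite (Dickson's lemma). -/
lemma fiber_finite (hL : ∀ u ∈ L, Nonneg u → u = 0) (b : Fin n → ℤ) :
    {y | inFiber L b y}.Finite := by
  by_contra hinf
  set f := Set.Infinite.natEmbedding _ hinf with hf
  have hpwo : (Set.univ : Set (Fin n → ℕ)).IsPWO :=
    Set.isPWO_of_wellQuasiOrderedLE _
  obtain ⟨m, k, hmk, hle⟩ :=
    Set.partiallyWellOrderedOn_iff_exists_lt.mp hpwo (fun m => fun i => ((f m : Fin n → ℤ) i).toNat) (fun _ => Set.mem_univ _)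
  have hmem : ∀ m : ℕ, inFiber L b (f m : Fin n → ℤ) := fun m => (f m).2
  have hsub : (f k : Fin n → ℤ) - (f m : Fin n → ℤ) ∈ L :=
    by simpa [sub_sub_sub_cancel_right] using L.sub_mem (hmem k).2 (hmem m).2
  have hnn : Nonneg ((f k : Fin n → ℤ) - (f m : Fin n → ℤ)) := by
    intro i
    have h1 := (hmem m).1 i
    have h2 := (hmem k).1 i
    have h3 : ((f m : Fin n → ℤ) i).toNat ≤ ((f k : Fin n → ℤ) i).toNat := hle i
    simp only [Pi.sub_apply]
    omega
  have := hL _ hsub hnn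
  have heq : (f m : Fin n → ℤ) = (f k : Fin n → ℤ) := by
    have := sub_eq_zero.mp this; exact this.symm
  exact absurd (f.injective (Subtype.ext heq)) (Nat.ne_of_lt hmk)

/-- the maximal ℓ¹-norm over the fiber of `b`. -/
noncomputable def fmu (L : AddSubgroup (Fin n → ℤ)) (b : Fin n → ℤ) : ℕ :=
  sSup ((fun y => (∑ i, y i).toNat) '' {y | inFiber L b y})

lemma fmu_le (hL : ∀ u ∈ L, Nonneg u → u = 0) {b y : Fin n → ℤ} (hy : inFiber L b y) :
    (∑ i, y i).toNat ≤ fmu L b :=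
  le_csSup (((fiber_finite hL b).image _).bddAbove) ⟨y, hy, rfl⟩

lemma fmu_lt (hL : ∀ u ∈ L, Nonneg u → u = 0) {x x' : Fin n → ℤ} (j : Fin n)
    (hx' : inFiber L x x') (hj : 1 ≤ x' j) :
    fmu L (x' - Pi.single j 1) < fmu L x := by
  have hc : Nonneg (x' - Pi.single j 1) := by
    intro i
    have := hx'.1 i
    by_cases hij : i = j
    · subst hij; simp only [Pi.sub_apply, Pi.single_eq_same]; omega
    · simp only [Pi.sub_apply, Pi.single_apply, if_neg hij]; omega
  have hne : ((fun y => (∑ i, y i).toNat) '' {y | inFiber L (x' - Pi.single j 1) y}).Nonempty :=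
    ⟨_, ⟨x' - Pi.single j 1, ⟨hc, by simpa using L.zero_mem⟩, rfl⟩⟩
  unfold fmu
  rw [Set.Finite.csSup_lt_iff ((fiber_finite hL _).image _) hne]
  rintro m ⟨y, hy, rfl⟩
  show (∑ i, y i).toNat < fmu L x
  have hy1 : inFiber L x (y + Pi.single j 1) := by
    constructor
    · intro i
      have h1 := hy.1 i
      by_cases hij : i = j
      · subst hij; simp only [Pi.add_apply, Pi.single_eq_same]; omega
      · simp only [Pi.add_apply, Pi.single_apply, if_neg hij]; omega
    · have he : y + Pi.single j 1 - x = (y - (x' - Pi.single j 1)) + (x' - x) := by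
        funext i; simp only [Pi.add_apply, Pi.sub_apply]; ring
      rw [he]
      exact L.add_mem hy.2 hx'.2
  have hle := fmu_le hL hy1
  have hsum : ∑ i, (y + Pi.single j 1 : Fin n → ℤ) i = (∑ i, y i) + 1 := by
    simp only [Pi.add_apply]
    rw [Finset.sum_add_distrib]
    congr 1
    simp [Finset.sum_pi_single']
  have hyn : 0 ≤ ∑ i, y i := Finset.sum_nonneg fun i _ => hy.1 i
  rw [hsum] at hle
  omega

/-- a finite path in a fiber has a `≻`-maximal node. -/
lemma path_max (hto : IsTermOrder L succ) {b : Fin n → ℤ} {k : ℕ} {p : ℕ → Fin n → ℤ}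
    (hp : ∀ i ≤ k, inFiber L b (p i)) :
    ∃ i₀ ≤ k, ∀ i ≤ k, p i = p i₀ ∨ succ (p i₀) (p i) := by
  induction k with
  | zero =>
    exact ⟨0, le_refl _, fun i hi => by
      have : i = 0 := Nat.le_zero.mp hi
      subst this; exact Or.inl rfl⟩
  | succ k ih =>
    obtain ⟨i₀, hi₀, hmax⟩ := ih (fun i hi => hp i (hi.trans (Nat.le_succ _)))
    by_cases h : p (k+1) = p i₀ ∨ succ (p i₀) (p (k+1))
    · refine ⟨i₀, hi₀.trans (Nat.le_succ _), fun i hi => ?_⟩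
      by_cases hik : i ≤ k
      · exact hmax i hik
      · have : i = k + 1 := by omega
        subst this; exact h
    · push_neg at h
      have hne : p (k+1) ≠ p i₀ := h.1
      have htot := hto.total b _ _ (hp _ le_rfl) (hp i₀ (hi₀.trans (Nat.le_succ _))) hne
      have hs : succ (p (k+1)) (p i₀) := htot.resolve_right h.2
      refine ⟨k+1, le_rfl, fun i hi => ?_⟩
      by_cases hik : i ≤ k
      · rcases hmax i hik with he | hs'
        · exact Or.inr (he ▸ hs)
        · exact Or.inr (hto.trans hs hs')
      · have : i = k + 1 := by omega
        subst this; exact Or.inl rfl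

/-- along a strictly decreasing path, the start dominates every later node. -/
lemma chain_succ (hto : IsTermOrder L succ) {k : ℕ} {p : ℕ → Fin n → ℤ}
    (hdec : ∀ i < k, succ (p i) (p (i+1))) :
    ∀ j, 1 ≤ j → j ≤ k → succ (p 0) (p j) := by
  intro j h1 h2
  induction j with
  | zero => omega
  | succ j ih =>
    by_cases hj : j = 0
    · subst hj; exact hdec 0 (by omega)
    · exact hto.trans (ih (by omega) (by omega)) (hdec j (by omega))

/-- lifting a reduction path by a nonnegative translation gives a `z`-bounded path. -/
lemma lift_red (hto : IsTermOrder L succ) {c B γ x₁ y₁ z : Fin n → ℤ} {k : ℕ}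
    {p : ℕ → Fin n → ℤ} (hγ : Nonneg γ)
    (hp : IsPathIn L G c k p) (h0 : p 0 = x₁) (hk : p k = y₁)
    (hred : ∀ i, 0 < i → i < k → ¬ (succ (p i) x₁ ∧ succ (p i) y₁))
    (hB : inFiber L B (x₁ + γ))
    (hzx : succ z (x₁ + γ)) (hzy : succ z (y₁ + γ)) :
    ∃ k' q, IsPathIn L G B k' q ∧ q 0 = x₁ + γ ∧ q k' = y₁ + γ ∧ ∀ i ≤ k', succ z (q i) := by
  refine ⟨k, fun i => p i + γ, ⟨?_, ?_⟩, by simp only []; rw [h0], by simp only []; rw [hk], ?_⟩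
  · intro i hi
    refine ⟨fun j => add_nonneg ((hp.1 i hi).1 j) (hγ j), ?_⟩
    have he : p i + γ - B = (p i - c) + ((x₁ + γ) - B) - (x₁ - c) := by
      funext j; simp only [Pi.add_apply, Pi.sub_apply]; ring
    rw [he]
    exact L.sub_mem (L.add_mem (hp.1 i hi).2 hB.2) (h0 ▸ (hp.1 0 (Nat.zero_le _)).2)
  · intro i hi
    rcases hp.2 i hi with h | h
    · left
      have : p i + γ - (p (i+1) + γ) = p i - p (i+1) := by
        funext j; simp only [Pi.add_apply, Pi.sub_apply]; ring
      rw [this]; exact h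
    · right
      have : p (i+1) + γ - (p i + γ) = p (i+1) - p i := by
        funext j; simp only [Pi.add_apply, Pi.sub_apply]; ring
      rw [this]; exact h
  · intro i hi
    show succ z (p i + γ)
    by_cases hi0 : i = 0
    · subst hi0; rw [h0]; exact hzx
    by_cases hik : i = k
    · subst hik; rw [hk]; exact hzy
    have hx₁f : inFiber L c x₁ := h0 ▸ hp.1 0 (Nat.zero_le _)
    have hy₁f : inFiber L c y₁ := hk ▸ hp.1 k le_rfl
    have hpif : inFiber L c (p i) := hp.1 i hi
    by_cases he : p i = x₁
    · rw [he]; exact hzx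
    rcases hto.total c _ _ hpif hx₁f he with hs | hs
    · by_cases he' : p i = y₁
      · rw [he']; exact hzy
      rcases hto.total c _ _ hpif hy₁f he' with hs' | hs'
      · exact absurd ⟨hs, hs'⟩ (hred i (by omega) (by omega))
      · exact hto.trans hzy (hto.additive _ _ γ hγ hs')
    · exact hto.trans hzx (hto.additive _ _ γ hγ hs)

/-- the key lemma: any critical path admits a bounded bypass. -/
lemma lemC (hL : ∀ u ∈ L, Nonneg u → u = 0) (hto : IsTermOrder L succ)
    (hG : G ⊆ Lpos L succ)
    (hcrit : ∀ u ∈ G, ∀ v ∈ G, suppV (xOf u v) ∩ suppV (yOf u v) = ∅ →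
        IsRedPath L G (zOf u v) succ (xOf u v) (yOf u v))
    {x : Fin n → ℤ}
    (IH : ∀ c : Fin n → ℤ, fmu L c < fmu L x →
      ∀ a b', inFiber L c a → inFiber L c b' → IsRedPath L G c succ a b')
    {x' z y' : Fin n → ℤ}
    (hc : IsCriticalIn L G x succ x' z y') :
    ∃ k p, IsPathIn L G x k p ∧ p 0 = x' ∧ p k = y' ∧ ∀ i ≤ k, succ z (p i) := by
  obtain ⟨hx'f, hzf, hy'f, hadj1, hadj2, hzx, hzy⟩ := hc
  have hu : z - x' ∈ G := orient hto hG hx'f.1 hzf.1 hadj1.symm hzx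
  have hv : z - y' ∈ G := orient hto hG hy'f.1 hzf.1 hadj2 hzy
  set u : Fin n → ℤ := z - x' with hu'
  set v : Fin n → ℤ := z - y' with hv'
  have hzup : ∀ i, vposPart u i ≤ z i := fun i =>
    max_le (by have := hx'f.1 i; simp only [hu', Pi.sub_apply]; omega) (hzf.1 i)
  have hzvp : ∀ i, vposPart v i ≤ z i := fun i =>
    max_le (by have := hy'f.1 i; simp only [hv', Pi.sub_apply]; omega) (hzf.1 i)
  have hγn : Nonneg (z - zOf u v) := fun i =>
    sub_nonneg.mpr (max_le (hzup i) (hzvp i))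
  have hxeq : xOf u v + (z - zOf u v) = x' := by
    funext i
    simp only [xOf, Pi.add_apply, Pi.sub_apply, hu']; ring
  have hyeq : yOf u v + (z - zOf u v) = y' := by
    funext i
    simp only [yOf, Pi.add_apply, Pi.sub_apply, hv']; ring
  by_cases hdisj : suppV (xOf u v) ∩ suppV (yOf u v) = ∅
  · obtain ⟨k, p, hp, h0, hk, hred⟩ := hcrit u hu v hv hdisj
    obtain ⟨k', q, h1, h2, h3, h4⟩ := lift_red hto hγn hp h0 hk hred
      (by rw [hxeq]; exact hx'f) (by rw [hxeq]; exact hzx) (by rw [hyeq]; exact hzy)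
    exact ⟨k', q, h1, by rw [h2, hxeq], by rw [h3, hyeq], h4⟩
  · have hover : ∃ j, xOf u v j ≠ 0 ∧ yOf u v j ≠ 0 := by
      rw [Set.eq_empty_iff_forall_notMem] at hdisj
      push_neg at hdisj
      obtain ⟨j, hj⟩ := hdisj
      exact ⟨j, hj.1, hj.2⟩
    obtain ⟨j, hxj, hyj⟩ := hover
    have hx0n : ∀ i, 0 ≤ xOf u v i := by
      intro i
      have h1 : u i ≤ vposPart u i := le_max_left _ _
      have h2 : vposPart u i ≤ zOf u v i := le_max_left _ _
      show 0 ≤ zOf u v i - u i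
      omega
    have hy0n : ∀ i, 0 ≤ yOf u v i := by
      intro i
      have h1 : v i ≤ vposPart v i := le_max_left _ _
      have h2 : vposPart v i ≤ zOf u v i := le_max_right _ _
      show 0 ≤ zOf u v i - v i
      omega
    have hx'j : 1 ≤ x' j := by
      rw [← hxeq]
      have h1 := hx0n j
      have h2 := hγn j
      simp only [Pi.add_apply, Pi.sub_apply] at *
      omega
    have hy'j : 1 ≤ y' j := by
      rw [← hyeq]
      have h1 := hy0n j
      have h2 := hγn j
      simp only [Pi.add_apply, Pi.sub_apply] at *
      omega
    have heN : Nonneg (Pi.single j 1 : Fin n → ℤ) := by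
      intro i
      by_cases hij : i = j
      · subst hij; simp
      · simp [Pi.single_apply, hij]
    have hcc : inFiber L (x' - Pi.single j 1) (x' - Pi.single j 1) := by
      refine ⟨fun i => ?_, by simpa using L.zero_mem⟩
      have := hx'f.1 i
      by_cases hij : i = j
      · subst hij; simp only [Pi.sub_apply, Pi.single_eq_same]; omega
      · simp only [Pi.sub_apply, Pi.single_apply, if_neg hij]; omega
    have hcy : inFiber L (x' - Pi.single j 1) (y' - Pi.single j 1) := by
      constructor
      · intro i
        have := hy'f.1 i
        by_cases hij : i = j
        · subst hij; simp only [Pi.sub_apply, Pi.single_eq_same]; omega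
        · simp only [Pi.sub_apply, Pi.single_apply, if_neg hij]; omega
      · have he : y' - Pi.single j 1 - (x' - Pi.single j 1) = (y' - x) - (x' - x) := by
          funext i; simp only [Pi.sub_apply]; ring
        rw [he]
        exact L.sub_mem hy'f.2 hx'f.2
    obtain ⟨k, p, hp, h0, hk, hred⟩ := IH (x' - Pi.single j 1) (fmu_lt hL j hx'f hx'j)
      (x' - Pi.single j 1) (y' - Pi.single j 1) hcc hcy
    obtain ⟨k', q, h1, h2, h3, h4⟩ := lift_red hto heN hp h0 hk hred
      (by rw [sub_add_cancel]; exact hx'f) (by rw [sub_add_cancel]; exact hzx)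
      (by rw [sub_add_cancel]; exact hzy)
    exact ⟨k', q, h1, by rw [h2, sub_add_cancel], by rw [h3, sub_add_cancel], h4⟩

/-- splicing a bypass into a path at an interior peak occurrence. -/
lemma splice {b z : Fin n → ℤ} {k l i : ℕ} {p w : ℕ → Fin n → ℤ}
    (hp : IsPathIn L G b k p) (hw : IsPathIn L G b l w)
    (hi0 : 0 < i) (hik : i < k) (hz : p i = z)
    (hw0 : w 0 = p (i-1)) (hwl : w l = p (i+1))
    (hwz : ∀ j ≤ l, w j ≠ z) :
    ∃ k' q, IsPathIn L G b k' q ∧ q 0 = p 0 ∧ q k' = p k ∧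
      (∀ j ≤ k', (∃ j' ≤ l, q j = w j') ∨ (∃ j' ≤ k, q j = p j')) ∧
      ((Finset.range (k'+1)).filter (fun j => q j = z)).card
        < ((Finset.range (k+1)).filter (fun j => p j = z)).card := by
  have hk2 : 2 ≤ k := by omega
  refine ⟨k + l - 2,
    fun j => if j < i then p j else if j + 1 ≤ i + l then w (j + 1 - i) else p (j + 2 - l),
    ⟨?_, ?_⟩, ?_, ?_, ?_, ?_⟩
  · -- fibers
    intro j hj
    beta_reduce
    split_ifs with c1 c2
    · exact hp.1 j (by omega)
    · exact hw.1 (j + 1 - i) (by omega)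
    · exact hp.1 (j + 2 - l) (by omega)
  · -- adjacency
    intro j hj
    beta_reduce
    by_cases c1 : j + 1 < i
    · rw [if_pos (show j < i from by omega), if_pos c1]
      exact hp.2 j (by omega)
    · by_cases c2 : j + 1 = i
      · rw [if_pos (show j < i from by omega)]
        by_cases cl : 1 ≤ l
        · rw [if_neg (show ¬ (j + 1 < i) from by omega),
            if_pos (show j + 1 + 1 ≤ i + l from by omega)]
          rw [show j + 1 + 1 - i = 1 from by omega]
          have e2 : p j = w 0 := by rw [hw0, show j = i - 1 from by omega]
          rw [e2]
          exact hw.2 0 (by omega)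
        · rw [if_neg (show ¬ (j + 1 < i) from by omega),
            if_neg (show ¬ (j + 1 + 1 ≤ i + l) from by omega)]
          rw [show j + 1 + 2 - l = i + 2 from by omega]
          have e2 : p j = p (i + 1) := by
            have e3 : p j = w 0 := by rw [hw0, show j = i - 1 from by omega]
            rw [e3, show (0:ℕ) = l from by omega, hwl]
          rw [e2]
          exact hp.2 (i+1) (by omega)
      · have hij : i ≤ j := by omega
        by_cases c3 : j + 2 ≤ i + l
        · rw [if_neg (show ¬ (j < i) from by omega),
            if_pos (show j + 1 ≤ i + l from by omega),
            if_neg (show ¬ (j + 1 < i) from by omega),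
            if_pos (show j + 1 + 1 ≤ i + l from by omega)]
          rw [show j + 1 + 1 - i = (j + 1 - i) + 1 from by omega]
          exact hw.2 (j + 1 - i) (by omega)
        · by_cases c4 : j + 1 ≤ i + l
          · have hl1 : 1 ≤ l := by omega
            rw [if_neg (show ¬ (j < i) from by omega), if_pos c4,
              if_neg (show ¬ (j + 1 < i) from by omega),
              if_neg (show ¬ (j + 1 + 1 ≤ i + l) from by omega)]
            rw [show j + 1 - i = l from by omega, hwl,
              show j + 1 + 2 - l = i + 2 from by omega]
            exact hp.2 (i+1) (by omega)
          · rw [if_neg (show ¬ (j < i) from by omega), if_neg c4,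
              if_neg (show ¬ (j + 1 < i) from by omega),
              if_neg (show ¬ (j + 1 + 1 ≤ i + l) from by omega)]
            rw [show j + 1 + 2 - l = (j + 2 - l) + 1 from by omega]
            exact hp.2 (j + 2 - l) (by omega)
  · -- left endpoint
    beta_reduce
    rw [if_pos hi0]
  · -- right endpoint
    beta_reduce
    by_cases c1 : k + l - 2 < i
    · have hl0 : l = 0 := by omega
      rw [if_pos c1]
      have e2 : p (k + l - 2) = w 0 := by
        rw [hw0, show k + l - 2 = i - 1 from by omega]
      rw [e2, show (0:ℕ) = l from by omega, hwl, show i + 1 = k from by omega]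
    · by_cases c2 : k + l - 2 + 1 ≤ i + l
      · rw [if_neg c1, if_pos c2]
        rw [show k + l - 2 + 1 - i = l from by omega, hwl,
          show i + 1 = k from by omega]
      · rw [if_neg c1, if_neg c2, show k + l - 2 + 2 - l = k from by omega]
  · -- node membership
    intro j hj
    beta_reduce
    split_ifs with c1 c2
    · exact Or.inr ⟨j, by omega, rfl⟩
    · exact Or.inl ⟨j + 1 - i, by omega, rfl⟩
    · exact Or.inr ⟨j + 2 - l, by omega, rfl⟩
  · -- cardinality decreases
    have hmem_i : i ∈ (Finset.range (k+1)).filter (fun j => p j = z) :=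
      Finset.mem_filter.mpr ⟨Finset.mem_range.mpr (by omega), hz⟩
    have hstep : ∀ j ∈ (Finset.range (k + l - 2 + 1)).filter
        (fun j => (if j < i then p j else if j + 1 ≤ i + l then w (j + 1 - i)
          else p (j + 2 - l)) = z), ¬ (j < i) → i + l ≤ j := by
      intro j hjm hcon
      obtain ⟨hjr, hjv⟩ := Finset.mem_filter.mp hjm
      by_contra hcon2
      rw [if_neg hcon, if_pos (by omega)] at hjv
      exact hwz (j + 1 - i) (by omega) hjv
    calc ((Finset.range (k + l - 2 + 1)).filter (fun j =>
          (if j < i then p j else if j + 1 ≤ i + l then w (j + 1 - i)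
            else p (j + 2 - l)) = z)).card
        ≤ (((Finset.range (k+1)).filter (fun j => p j = z)).erase i).card := by
          apply Finset.card_le_card_of_injOn (fun j => if j < i then j else j + 2 - l)
          · intro j hjm
            have hjm' := hjm
            obtain ⟨hjr, hjv⟩ := Finset.mem_filter.mp hjm
            rw [Finset.mem_range] at hjr
            by_cases c1 : j < i
            · rw [if_pos c1] at hjv
              beta_reduce
              rw [if_pos c1]
              exact Finset.mem_erase.mpr ⟨by omega, Finset.mem_filter.mpr
                ⟨Finset.mem_range.mpr (by omega), hjv⟩⟩
            · have hge : i + l ≤ j := hstep j hjm' c1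
              rw [if_neg c1, if_neg (by omega)] at hjv
              beta_reduce
              rw [if_neg c1]
              exact Finset.mem_erase.mpr ⟨by omega, Finset.mem_filter.mpr
                ⟨Finset.mem_range.mpr (by omega), hjv⟩⟩
          · intro j1 hj1 j2 hj2 hf
            have h1 := hstep j1 hj1
            have h2 := hstep j2 hj2
            beta_reduce at hf
            by_cases c1 : j1 < i <;> by_cases c2 : j2 < i
            · rwa [if_pos c1, if_pos c2] at hf
            · rw [if_pos c1, if_neg c2] at hf; have := h2 c2; omega
            · rw [if_neg c1, if_pos c2] at hf; have := h1 c1; omega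
            · rw [if_neg c1, if_neg c2] at hf
              have := h1 c1; have := h2 c2; omega
      _ < ((Finset.range (k+1)).filter (fun j => p j = z)).card :=
          Finset.card_erase_lt_of_mem hmem_i
/-- any two points of a common fiber are joined by a reduction path. -/
lemma lemS (hL : ∀ u ∈ L, Nonneg u → u = 0) (hto : IsTermOrder L succ)
    (hG : G ⊆ Lpos L succ) (hgen : IsGenSet L G)
    (hcrit : ∀ u ∈ G, ∀ v ∈ G, suppV (xOf u v) ∩ suppV (yOf u v) = ∅ →
        IsRedPath L G (zOf u v) succ (xOf u v) (yOf u v)) :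
    ∀ N x, fmu L x ≤ N → ∀ a b', inFiber L x a → inFiber L x b' →
      IsRedPath L G x succ a b' := by
  intro N
  induction N using Nat.strong_induction_on with
  | _ N IHN =>
  intro x hμ a b' ha hb'
  have IH : ∀ c, fmu L c < fmu L x → ∀ a₁ b₁, inFiber L c a₁ → inFiber L c b₁ →
      IsRedPath L G c succ a₁ b₁ :=
    fun c hlt => IHN (fmu L c) (lt_of_lt_of_le hlt hμ) c le_rfl
  have key : ∀ z, inFiber L x z →
      ∀ k p, IsPathIn L G x k p → p 0 = a → p k = b' →
        (∀ i ≤ k, p i = z ∨ succ z (p i)) → IsRedPath L G x succ a b' := by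
    intro z
    refine (hto.wf x).induction z
      (C := fun z => inFiber L x z → ∀ k p, IsPathIn L G x k p → p 0 = a → p k = b' →
        (∀ i ≤ k, p i = z ∨ succ z (p i)) → IsRedPath L G x succ a b') ?_
    clear z
    intro z PIH hzf k p hp h0 hk hbd
    by_cases hza : succ z a ∧ succ z b'
    · suffices Q : ∀ c k p, IsPathIn L G x k p → p 0 = a → p k = b' →
          (∀ i ≤ k, p i = z ∨ succ z (p i)) →
          ((Finset.range (k+1)).filter (fun j => p j = z)).card ≤ c →
          IsRedPath L G x succ a b' from Q _ k p hp h0 hk hbd le_rfl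
      intro c
      induction c with
      | zero =>
        intro k p hp h0 hk hbd hcnt
        have hnz : ∀ i ≤ k, succ z (p i) := by
          intro i hi
          rcases hbd i hi with he | hs
          · exfalso
            have hmm : i ∈ (Finset.range (k+1)).filter (fun j => p j = z) :=
              Finset.mem_filter.mpr ⟨Finset.mem_range.mpr (by omega), he⟩
            have := Finset.card_pos.mpr ⟨i, hmm⟩
            omega
          · exact hs
        obtain ⟨i₀, hi₀, hmax⟩ := path_max hto hp.1
        exact PIH (p i₀) ⟨hp.1 i₀ hi₀, hzf, hnz i₀ hi₀⟩ (hp.1 i₀ hi₀) k p hp h0 hk hmax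
      | succ c IHc =>
        intro k p hp h0 hk hbd hcnt
        by_cases hcle : ((Finset.range (k+1)).filter (fun j => p j = z)).card ≤ c
        · exact IHc k p hp h0 hk hbd hcle
        · have hpos : 0 < ((Finset.range (k+1)).filter (fun j => p j = z)).card := by omega
          obtain ⟨i, hi⟩ := Finset.card_pos.mp hpos
          obtain ⟨hir, hiz⟩ := Finset.mem_filter.mp hi
          rw [Finset.mem_range] at hir
          have hi0 : 0 < i := by
            rcases Nat.eq_zero_or_pos i with h | h
            · exfalso
              rw [h, h0] at hiz
              exact hto.irrefl z (hiz ▸ hza.1)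
            · exact h
          have hik : i < k := by
            rcases Nat.lt_or_ge i k with h | h
            · exact h
            · exfalso
              have he : i = k := by omega
              rw [he, hk] at hiz
              exact hto.irrefl z (hiz ▸ hza.2)
          have hadj1 : adjS G (p (i-1)) (p i) := by
            have := hp.2 (i-1) (by omega)
            rwa [show i - 1 + 1 = i from by omega] at this
          have hadj2 : adjS G (p i) (p (i+1)) := hp.2 i (by omega)
          have hne1 : p (i-1) ≠ z := by
            intro he
            have hne := adjS_ne hto hG hadj1
            rw [he, hiz] at hne
            exact hne rfl
          have hne2 : p (i+1) ≠ z := by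
            intro he
            have hne := adjS_ne hto hG hadj2
            rw [he, hiz] at hne
            exact hne rfl
          have hs1 : succ z (p (i-1)) := (hbd (i-1) (by omega)).resolve_left hne1
          have hs2 : succ z (p (i+1)) := (hbd (i+1) (by omega)).resolve_left hne2
          have hcritp : IsCriticalIn L G x succ (p (i-1)) z (p (i+1)) :=
            ⟨hp.1 (i-1) (by omega), hzf, hp.1 (i+1) (by omega),
             by rw [← hiz]; exact hadj1, by rw [← hiz]; exact hadj2, hs1, hs2⟩
          obtain ⟨l, wp, hwp, hw0, hwl, hwb⟩ := lemC hL hto hG hcrit IH hcritp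
          obtain ⟨k', q, hq, hq0, hqk, hqnode, hqcnt⟩ :=
            splice hp hwp hi0 hik hiz hw0 hwl
              (fun j hj he => hto.irrefl z (he ▸ hwb j hj))
          refine IHc k' q hq (by rw [hq0, h0]) (by rw [hqk, hk]) ?_ (by omega)
          intro jj hjj
          rcases hqnode jj hjj with ⟨j', hj', he⟩ | ⟨j', hj', he⟩
          · right; rw [he]; exact hwb j' hj'
          · rw [he]; exact hbd j' hj'
    · refine ⟨k, p, hp, h0, hk, ?_⟩
      intro i h1 h2 hcon
      apply hza
      constructor
      · rcases hbd i (by omega) with he | hs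
        · rw [← he]; exact hcon.1
        · exact hto.trans hs hcon.1
      · rcases hbd i (by omega) with he | hs
        · rw [← he]; exact hcon.2
        · exact hto.trans hs hcon.2
  obtain ⟨k, p, hp, h0, hk⟩ := hgen x a b' ha hb'
  obtain ⟨i₀, hi₀, hmax⟩ := path_max hto hp.1
  exact key (p i₀) (hp.1 i₀ hi₀) k p hp h0 hk hmax

end Proof


/-- cancellation criterion: if `G` is a generating set of `L`,
then `G ⊆ L_≻` is a `≻`-Gröbner basis of `L` iff for each pair `u,v ∈ G` with
`supp(x^(u,v)) ∩ supp(y^(u,v)) = ∅` there is a `≻`-reduction path between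
`x^(u,v)` and `y^(u,v)` in `G(F_{L,z^(u,v)},G)`. -/
theorem stmt18 {n : ℕ} (L : AddSubgroup (Fin n → ℤ))
    (hL : ∀ u ∈ L, Nonneg u → u = 0)
    (succ : (Fin n → ℤ) → (Fin n → ℤ) → Prop) (hto : IsTermOrder L succ)
    (G : Set (Fin n → ℤ)) (hG : G ⊆ Lpos L succ)
    (hgen : IsGenSet L G) :
    IsGroebner L succ G ↔
      ∀ u ∈ G, ∀ v ∈ G, suppV (xOf u v) ∩ suppV (yOf u v) = ∅ →
        IsRedPath L G (zOf u v) succ (xOf u v) (yOf u v) := by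
  constructor
  · -- Gröbner ⟹ reduction paths between S-pair endpoints
    intro hGroe u hu v hv _hdisj
    have huL : u ∈ L := (hG hu).1
    have hvL : v ∈ L := (hG hv).1
    have hx0n : Nonneg (xOf u v) := by
      intro i
      have h1 : u i ≤ vposPart u i := le_max_left _ _
      have h2 : vposPart u i ≤ zOf u v i := le_max_left _ _
      show 0 ≤ zOf u v i - u i
      omega
    have hy0n : Nonneg (yOf u v) := by
      intro i
      have h1 : v i ≤ vposPart v i := le_max_left _ _
      have h2 : vposPart v i ≤ zOf u v i := le_max_right _ _
      show 0 ≤ zOf u v i - v i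
      omega
    obtain ⟨m, hm, k, p, hp, h0, hk, hdec⟩ := hGroe (xOf u v) hx0n
    obtain ⟨m', hm', k', p', hp', h0', hk', hdec'⟩ := hGroe (yOf u v) hy0n
    have hyx : inFiber L (xOf u v) (yOf u v) := by
      refine ⟨hy0n, ?_⟩
      have he : yOf u v - xOf u v = u - v := by
        funext i
        simp only [xOf, yOf, Pi.sub_apply]
        ring
      rw [he]
      exact L.sub_mem huL hvL
    have hmm : m' = m := by
      have hm'x : inFiber L (xOf u v) m' := (fiber_trans hyx).mp hm'.1
      by_contra hne
      exact succ_asymm hto (hm.2 m' hm'x hne)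
        (hm'.2 m ((fiber_trans hyx).mpr hm.1) (Ne.symm hne))
    subst hmm
    have hxz : inFiber L (zOf u v) (xOf u v) := by
      refine ⟨hx0n, ?_⟩
      have he : xOf u v - zOf u v = -u := by
        funext i
        simp only [xOf, Pi.sub_apply, Pi.neg_apply]
        ring
      rw [he]
      exact L.neg_mem huL
    have hyz : inFiber L (zOf u v) (yOf u v) := by
      refine ⟨hy0n, ?_⟩
      have he : yOf u v - zOf u v = -v := by
        funext i
        simp only [yOf, Pi.sub_apply, Pi.neg_apply]
        ring
      rw [he]
      exact L.neg_mem hvL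
    refine ⟨k + k', fun j => if j ≤ k then p j else p' (k + k' - j), ⟨?_, ?_⟩, ?_, ?_, ?_⟩
    · intro j hj
      beta_reduce
      split_ifs with c1
      · exact (fiber_trans hxz).mp (hp.1 j c1)
      · exact (fiber_trans hyz).mp (hp'.1 (k + k' - j) (by omega))
    · intro j hj
      beta_reduce
      by_cases c1 : j + 1 ≤ k
      · rw [if_pos (show j ≤ k from by omega), if_pos c1]
        exact hp.2 j (by omega)
      · by_cases c2 : j ≤ k
        · have hjk : j = k := by omega
          rw [if_pos c2, if_neg c1]
          have hk'1 : 1 ≤ k' := by omega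
          have e1 : k + k' - (j + 1) = k' - 1 := by omega
          rw [e1, hjk, hk, ← hk']
          have := (hp'.2 (k' - 1) (by omega)).symm
          rwa [show k' - 1 + 1 = k' from by omega] at this
        · rw [if_neg c2, if_neg c1]
          have e1 : k + k' - j = (k + k' - (j + 1)) + 1 := by omega
          rw [e1]
          exact (hp'.2 (k + k' - (j + 1)) (by omega)).symm
    · beta_reduce
      rw [if_pos (Nat.zero_le _), h0]
    · beta_reduce
      by_cases c1 : k + k' ≤ k
      · rw [if_pos c1, show k + k' = k from by omega, hk, ← hk',
          show k' = 0 from by omega, h0']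
      · rw [if_neg c1, show k + k' - (k + k') = 0 from by omega, h0']
    · intro j hj1 hj2
      beta_reduce
      split_ifs with c1
      · intro hcon
        have hchain : succ (p 0) (p j) := chain_succ hto hdec j (by omega) c1
        rw [h0] at hchain
        exact succ_asymm hto hchain hcon.1
      · intro hcon
        have ht1 : 1 ≤ k + k' - j := by omega
        have ht2 : k + k' - j ≤ k' := by omega
        have hchain : succ (p' 0) (p' (k + k' - j)) := chain_succ hto hdec' _ ht1 ht2
        rw [h0'] at hchain
        exact succ_asymm hto hchain hcon.2
  · -- criterion ⟹ Gröbner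
    intro hcrit x hx
    have hxf : inFiber L x x := ⟨hx, by simpa using L.zero_mem⟩
    obtain ⟨m, hmf, hmin⟩ := (hto.wf x).has_min {y | inFiber L x y} ⟨x, hxf⟩
    have hmin' : ∀ y, inFiber L x y → y ≠ m → succ y m := by
      intro y hy hne
      rcases hto.total x y m hy hmf hne with h | h
      · exact h
      · exact absurd ⟨hy, hmf, h⟩ (hmin y hy)
    refine ⟨m, ⟨hmf, hmin'⟩, ?_⟩
    have hdesc : ∀ y, inFiber L x y → ∃ k p, IsPathIn L G x k p ∧ p 0 = y ∧ p k = m ∧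
        ∀ i < k, succ (p i) (p (i+1)) := by
      intro y
      refine (hto.wf x).induction y
        (C := fun y => inFiber L x y → ∃ k p, IsPathIn L G x k p ∧ p 0 = y ∧ p k = m ∧
          ∀ i < k, succ (p i) (p (i+1))) ?_
      clear y
      intro y DIH hy
      by_cases hym : y = m
      · subst hym
        exact ⟨0, fun _ => y, ⟨fun i _ => hmf, fun i hi => absurd hi (by omega)⟩,
          rfl, rfl, fun i hi => absurd hi (by omega)⟩
      · obtain ⟨k, p, hp, h0, hk, hred⟩ :=
          lemS hL hto hG hgen hcrit (fmu L x) x le_rfl y m hy hmf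
        have hk0 : 0 < k := by
          rcases Nat.eq_zero_or_pos k with h | h
          · exfalso
            rw [h] at hk
            rw [← h0, hk] at hym
            exact hym rfl
          · exact h
        have hp1f : inFiber L x (p 1) := hp.1 1 (by omega)
        have hp1ne : p 1 ≠ y := by
          have hne := adjS_ne hto hG (hp.2 0 hk0)
          rw [h0] at hne
          exact fun he => hne he.symm
        have hyp1 : succ y (p 1) := by
          by_cases h1m : p 1 = m
          · rw [h1m]; exact hmin' y hy hym
          · by_cases h1k : 1 < k
            · have hnred := hred 1 one_pos h1k
              have hs : succ (p 1) m := hmin' (p 1) hp1f h1m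
              have hns : ¬ succ (p 1) y := fun hc => hnred ⟨hc, hs⟩
              rcases hto.total x (p 1) y hp1f hy hp1ne with h | h
              · exact absurd h hns
              · exact h
            · exfalso
              have he : k = 1 := by omega
              rw [he] at hk
              exact h1m hk
        obtain ⟨l, q, hq, hq0, hql, hqdec⟩ := DIH (p 1) ⟨hp1f, hy, hyp1⟩ hp1f
        refine ⟨l+1, fun j => if j = 0 then y else q (j-1), ⟨?_, ?_⟩, by simp, ?_, ?_⟩
        · intro j hj
          beta_reduce
          split_ifs with c1
          · exact hy
          · exact hq.1 (j-1) (by omega)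
        · intro j hj
          beta_reduce
          by_cases c1 : j = 0
          · rw [if_pos c1, if_neg (by omega : ¬ (j + 1 = 0))]
            rw [show j + 1 - 1 = 0 from by omega, hq0]
            have := hp.2 0 hk0
            rwa [h0] at this
          · rw [if_neg c1, if_neg (by omega : ¬ (j + 1 = 0))]
            have := hq.2 (j-1) (by omega)
            rwa [show j - 1 + 1 = j + 1 - 1 from by omega] at this
        · beta_reduce
          rw [if_neg (by omega : ¬ (l + 1 = 0)), show l + 1 - 1 = l from by omega, hql]
        · intro j hj
          beta_reduce
          by_cases c1 : j = 0
          · rw [if_pos c1, if_neg (by omega : ¬ (j + 1 = 0)),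
              show j + 1 - 1 = 0 from by omega, hq0]
            exact hyp1
          · rw [if_neg c1, if_neg (by omega : ¬ (j + 1 = 0))]
            have := hqdec (j-1) (by omega)
            rwa [show j - 1 + 1 = j + 1 - 1 from by omega] at this
    exact hdesc x hxf
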